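/- For all integers n > k ≥ 0, Σ ∏_{t=0}^{k} C_{i_t} = ((2k+2)/(n+1))·C(2n−2k−1, n), where the sum ranges over all compositions (i_0, i_1, …, i_k) of n−k into k+1 positive parts. -/

import Mathlib

open PowerSeries Finset

/-- The Catalan generating function. -/
noncomputable def catF : PowerSeries ℚ := PowerSeries.mk fun n => (catalan n : ℚ)

lemma coeff_catF (n : ℕ) : PowerSeries.coeff n catF = (catalan n : ℚ) :=
  PowerSeries.coeff_mk _ _

lemma catF_eq : catF = 1 + PowerSeries.X * catF ^ 2 := by
  ext n
  cases n with
  | zero => simp [coeff_catF]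
  | succ n =>
      rw [map_add, PowerSeries.coeff_succ_X_mul, sq, PowerSeries.coeff_mul, coeff_catF,
        catalan_succ']
      push_cast
      simp [coeff_catF, PowerSeries.coeff_one]

lemma sum_antidiagonalTuple_succ {M : Type*} [AddCommMonoid M] (k n : ℕ)
    (f : (Fin (k + 1) → ℕ) → M) :
    ∑ x ∈ Finset.Nat.antidiagonalTuple (k + 1) n, f x
      = ∑ p ∈ Finset.HasAntidiagonal.antidiagonal n, ∑ x ∈ Finset.Nat.antidiagonalTuple k p.2,
          f (Fin.cons p.1 x) := by
  rw [Finset.sum_sigma']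
  refine Finset.sum_nbij' (i := fun (y : Fin (k + 1) → ℕ) => (⟨(y 0, ∑ i : Fin k, y i.succ), Fin.tail y⟩ :
      (_ : ℕ × ℕ) × (Fin k → ℕ)))
    (j := fun x => Fin.cons x.1.1 x.2) ?_ ?_ ?_ ?_ ?_
  · intro y hy
    rw [Finset.Nat.mem_antidiagonalTuple, Fin.sum_univ_succ] at hy
    simp only [Finset.mem_sigma, Finset.HasAntidiagonal.mem_antidiagonal, Finset.Nat.mem_antidiagonalTuple]
    exact ⟨hy, rfl⟩
  · intro x hx
    rw [Finset.mem_sigma, Finset.HasAntidiagonal.mem_antidiagonal, Finset.Nat.mem_antidiagonalTuple] at hx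
    rw [Finset.Nat.mem_antidiagonalTuple, Fin.sum_univ_succ]
    simp only [Fin.cons_zero, Fin.cons_succ]
    rw [hx.2, hx.1]
  · intro y _
    exact Fin.cons_self_tail y
  · intro x hx
    rw [Finset.mem_sigma, Finset.HasAntidiagonal.mem_antidiagonal] at hx
    obtain ⟨⟨a, b⟩, y⟩ := x
    have hb : ∑ i, y i = b := Finset.Nat.mem_antidiagonalTuple.mp hx.2
    simp [Fin.tail_cons, hb]
  · intro y _
    rw [Fin.cons_self_tail y]

lemma coeff_pow_tuple (φ : PowerSeries ℚ) (p n : ℕ) :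
    PowerSeries.coeff n (φ ^ p)
      = ∑ x ∈ Finset.Nat.antidiagonalTuple p n, ∏ t, PowerSeries.coeff (x t) φ := by
  induction p generalizing n with
  | zero =>
      cases n with
      | zero => simp
      | succ n => simp [PowerSeries.coeff_one]
  | succ p ih =>
      rw [pow_succ', PowerSeries.coeff_mul, sum_antidiagonalTuple_succ]
      refine Finset.sum_congr rfl fun q _ => ?_
      rw [ih, Finset.mul_sum]
      refine Finset.sum_congr rfl fun x _ => ?_
      rw [Fin.prod_univ_succ]
      simp

/-- The base case `p = 1`. -/
lemma catalan_cast_eq (n : ℕ) :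
    (catalan n : ℚ) = 1 / (2 * n + 1) * ((2 * n + 1).choose n) := by
  have h1 : ((n : ℚ) + 1) * catalan n = (2 * n).choose n := by
    exact_mod_cast congrArg (Nat.cast : ℕ → ℚ) (succ_mul_catalan_eq_centralBinom n)
  have h2 : (2 * n + 1) * (2 * n).choose n = (2 * n + 1).choose (n + 1) * (n + 1) :=
    Nat.add_one_mul_choose_eq (2 * n) n
  have h3 : (2 * n + 1).choose (n + 1) = (2 * n + 1).choose n := Nat.choose_symm_half n
  rw [h3] at h2
  have h2' : ((2 * n : ℚ) + 1) * ((2 * n).choose n : ℚ)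
      = ((2 * n + 1).choose n : ℚ) * ((n : ℚ) + 1) := by exact_mod_cast h2
  have hn1 : ((n : ℚ) + 1) ≠ 0 := by positivity
  have hd : ((2 * n : ℚ) + 1) ≠ 0 := by positivity
  field_simp
  nlinarith [h1, h2']

/-- The binomial identity for the induction step. -/
lemma step_identity (m q : ℕ) :
    ((q : ℚ) + 1) / (2 * (m + 1) + (q + 1)) * (((2 * (m + 1) + (q + 1)).choose (m + 1) : ℚ))
      = (q : ℚ) / (2 * (m + 1) + q) * (((2 * (m + 1) + q).choose (m + 1) : ℚ))
        + ((q : ℚ) + 2) / (2 * m + (q + 2)) * (((2 * m + (q + 2)).choose m : ℚ)) := by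
  have e1 : 2 * (m + 1) + (q + 1) = (2 * m + q + 2) + 1 := by ring
  have e2 : 2 * (m + 1) + q = 2 * m + q + 2 := by ring
  have e3 : 2 * m + (q + 2) = 2 * m + q + 2 := by ring
  rw [e1, e2, e3]
  have pascal : (2 * m + q + 2 + 1).choose (m + 1)
      = (2 * m + q + 2).choose m + (2 * m + q + 2).choose (m + 1) :=
    Nat.choose_succ_succ' (2 * m + q + 2) m
  have ratio : (2 * m + q + 2).choose (m + 1) * (m + 1)
      = (2 * m + q + 2).choose m * (2 * m + q + 2 - m) :=
    Nat.choose_succ_right_eq (2 * m + q + 2) m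
  have esub : 2 * m + q + 2 - m = m + q + 2 := by omega
  rw [esub] at ratio
  have ratio' : ((2 * m + q + 2).choose (m + 1) : ℚ) * ((m : ℚ) + 1)
      = ((2 * m + q + 2).choose m : ℚ) * ((m : ℚ) + (q : ℚ) + 2) := by exact_mod_cast ratio
  have pascal' : ((2 * m + q + 2 + 1).choose (m + 1) : ℚ)
      = ((2 * m + q + 2).choose m : ℚ) + ((2 * m + q + 2).choose (m + 1) : ℚ) := by
    exact_mod_cast pascal
  set c1 : ℚ := ((2 * m + q + 2).choose (m + 1) : ℚ)
  set c2 : ℚ := ((2 * m + q + 2).choose m : ℚ)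
  rw [pascal']
  push_cast
  have hd1 : (2 * (m : ℚ) + (q + 2) + 1) ≠ 0 := by positivity
  have hd2 : (2 * (m : ℚ) + q + 2) ≠ 0 := by positivity
  field_simp
  ring_nf
  nlinarith [ratio']

/-- The coefficient formula for powers of the Catalan generating function. -/
lemma coeff_catF_pow : ∀ n p : ℕ, 0 < p →
    PowerSeries.coeff n (catF ^ p)
      = (p : ℚ) / (2 * n + p) * ((2 * n + p).choose n) := by
  intro n
  induction n using Nat.strong_induction_on with
  | _ n IH =>
    cases n with
    | zero =>
        intro p hp
        simp only [PowerSeries.coeff_zero_eq_constantCoeff, map_pow]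
        have h0 : PowerSeries.constantCoeff catF = 1 := by
          simpa using coeff_catF 0
        rw [h0, one_pow, Nat.mul_zero, Nat.zero_add, Nat.choose_zero_right]
        have hp' : (p : ℚ) ≠ 0 := by exact_mod_cast hp.ne'
        rw [Nat.cast_zero, Nat.cast_one]
        rw [mul_zero, zero_add, div_self hp', one_mul]
    | succ m =>
        intro p
        induction p with
        | zero => intro h; exact absurd h (lt_irrefl 0)
        | succ q ihq =>
            intro _
            cases Nat.eq_zero_or_pos q with
            | inl hq0 =>
                subst hq0
                rw [pow_one, coeff_catF, catalan_cast_eq]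
                push_cast
                ring_nf
            | inr hq =>
                have expand : catF ^ (q + 1) = catF ^ q + PowerSeries.X * catF ^ (q + 2) := by
                  calc catF ^ (q + 1) = catF ^ q * catF := by rw [pow_succ]
                    _ = catF ^ q * (1 + PowerSeries.X * catF ^ 2) := by rw [← catF_eq]
                    _ = catF ^ q + PowerSeries.X * catF ^ (q + 2) := by ring
                rw [expand, map_add, PowerSeries.coeff_succ_X_mul, ihq hq,
                  IH m (Nat.lt_succ_self m) (q + 2) (by omega)]
                push_cast
                exact (step_identity m q).symm

theorem catalan_composition_sum (n k : ℕ) (h : k < n) :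
    ∑ i ∈ (Finset.Nat.antidiagonalTuple (k + 1) (n - k)).filter (fun i => ∀ t, 0 < i t),
      ∏ t : Fin (k + 1), (catalan (i t) : ℚ)
      = ((2 * k + 2 : ℚ) / (n + 1)) * ((2 * n - 2 * k - 1).choose n) := by
  have hsub : catF - 1 = PowerSeries.X * catF ^ 2 := by
    nth_rewrite 1 [catF_eq]; ring
  have hcoeff_sub : ∀ i : ℕ, PowerSeries.coeff i (catF - 1)
      = if i = 0 then 0 else (catalan i : ℚ) := by
    intro i
    rw [map_sub, coeff_catF, PowerSeries.coeff_one]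
    cases i with
    | zero => simp
    | succ j => simp
  -- rewrite LHS as a coefficient
  have key : ∑ i ∈ (Finset.Nat.antidiagonalTuple (k + 1) (n - k)).filter
        (fun i => ∀ t, 0 < i t), ∏ t : Fin (k + 1), (catalan (i t) : ℚ)
      = PowerSeries.coeff (n - k) ((catF - 1) ^ (k + 1)) := by
    rw [coeff_pow_tuple, Finset.sum_filter]
    refine Finset.sum_congr rfl fun x _ => ?_
    by_cases hx : ∀ t, 0 < x t
    · rw [if_pos hx]
      refine (Finset.prod_congr rfl fun t _ => ?_).symm
      rw [hcoeff_sub, if_neg (hx t).ne']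
    · rw [if_neg hx]
      push_neg at hx
      obtain ⟨t, ht⟩ := hx
      refine (Finset.prod_eq_zero (Finset.mem_univ t) ?_).symm
      rw [hcoeff_sub, if_pos (by omega)]
  rw [key, hsub, mul_pow, ← pow_mul]
  by_cases hn : 2 * k + 1 ≤ n
  · obtain ⟨j, rfl⟩ : ∃ j, n = 2 * k + 1 + j := ⟨n - (2 * k + 1), by omega⟩
    have h1 : (2 * k + 1 + j) - k = (k + 1) + j := by omega
    rw [h1, PowerSeries.coeff_X_pow_mul' _ _ _]
    rw [if_pos (by omega)]
    have h2 : (k + 1) + j - (k + 1) = j := by omega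
    have h3 : 2 * (k + 1) = 2 * k + 2 := by ring
    rw [h2, h3, coeff_catF_pow j (2 * k + 2) (by omega)]
    -- now a binomial computation
    have e1 : 2 * j + (2 * k + 2) = 2 * k + 2 * j + 1 + 1 := by ring
    have e2 : 2 * (2 * k + 1 + j) - 2 * k - 1 = 2 * k + 2 * j + 1 := by omega
    rw [e1, e2]
    have e4 : 2 * k + 1 + j = 2 * k + j + 1 := by omega
    rw [e4]
    have symmm : (2 * k + 2 * j + 1 + 1).choose j
        = (2 * k + 2 * j + 1 + 1).choose (2 * k + j + 2) := by
      have := Nat.choose_symm (n := 2 * k + 2 * j + 1 + 1) (k := 2 * k + j + 2) (by omega)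
      have e5 : 2 * k + 2 * j + 1 + 1 - (2 * k + j + 2) = j := by omega
      rw [e5] at this
      exact this
    rw [symmm]
    have hm := Nat.add_one_mul_choose_eq (2 * k + 2 * j + 1) (2 * k + j + 1)
    have hm' : ((2 * k + 2 * j + 1 : ℕ) + 1 : ℚ) * ((2 * k + 2 * j + 1).choose (2 * k + j + 1) : ℚ)
        = ((2 * k + 2 * j + 1 + 1).choose (2 * k + j + 2) : ℚ) * ((2 * k + j + 1 : ℕ) + 1 : ℚ) := by
      exact_mod_cast hm
    push_cast at hm' ⊢
    have hd1 : (2 * (j : ℚ) + (2 * k + 2)) ≠ 0 := by positivity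
    have hd2 : (2 * (k : ℚ) + j + 1 + 1) ≠ 0 := by positivity
    field_simp
    nlinarith [hm']
  · rw [PowerSeries.coeff_X_pow_mul' _ _ _, if_neg (by omega)]
    have : 2 * n - 2 * k - 1 < n := by omega
    rw [Nat.choose_eq_zero_of_lt this]
    simp
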